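/- Fix e with 0 < e < 1/2. For ε ∈ (0, 2e) define c₁ = I₀''(ε)/2 + ε·[I₀'(2e−ε) − I₀'(ε)]/(2(e−ε)²), c₂ = I₀''(2e−ε)/2 + ε·[I₀'(2e−ε) − I₀'(ε)]/(2(e−ε)²), and c₃ = (2e−ε)·[I₀'(2e−ε) − I₀'(ε)]/(2(e−ε)²). Then there exists ε₀ > 0 such that for all ε ∈ (0, ε₀): c₁ > 0, c₂ > 1, c₃ > 0, and c₁·c₂ > c₃². -/

import Mathlib

open MeasureTheory Real Set Filter

noncomputable section

/-- `I₀(u) = (1/2)[u ln u + (1-u) ln(1-u)]`, with the convention `log 0 = 0`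
    giving `I₀(0) = I₀(1) = 0`. -/
def I0 (u : ℝ) : ℝ := (u * Real.log u + (1 - u) * Real.log (1 - u)) / 2

/-- `I₀'(u) = (1/2)[ln u − ln(1−u)]`. -/
def I0d (u : ℝ) : ℝ := (Real.log u - Real.log (1 - u)) / 2

/-- `I₀''(u) = (1/2)[1/u + 1/(1−u)]`. -/
def I0dd (u : ℝ) : ℝ := (1 / u + 1 / (1 - u)) / 2

/-- A graphon: a measurable, symmetric function `[0,1]² → [0,1]`
    (here defined on all of `ℝ²`, with values used only on `[0,1]²`). -/
def IsGraphon (g : ℝ → ℝ → ℝ) : Prop :=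
  Measurable (Function.uncurry g) ∧ (∀ x y, g x y = g y x) ∧ ∀ x y, g x y ∈ Icc (0 : ℝ) 1

/-- The edge density `e(g) = ∫₀¹∫₀¹ g(x,y) dx dy`. -/
def edgeDensity (g : ℝ → ℝ → ℝ) : ℝ :=
  ∫ x in Icc (0 : ℝ) 1, ∫ y in Icc (0 : ℝ) 1, g x y

/-- The triangle density `t(g) = ∫₀¹∫₀¹∫₀¹ g(x,y) g(y,z) g(z,x) dx dy dz`. -/
def triangleDensity (g : ℝ → ℝ → ℝ) : ℝ :=
  ∫ x in Icc (0 : ℝ) 1, ∫ y in Icc (0 : ℝ) 1, ∫ z in Icc (0 : ℝ) 1, g x y * g y z * g z x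

/-- The rate function `I(g) = ∫₀¹∫₀¹ I₀(g(x,y)) dx dy`. -/
def rate (g : ℝ → ℝ → ℝ) : ℝ :=
  ∫ x in Icc (0 : ℝ) 1, ∫ y in Icc (0 : ℝ) 1, I0 (g x y)

/-- Lebesgue measure restricted to `[0,1]`. -/
def unitMeasure : Measure ℝ := volume.restrict (Icc (0 : ℝ) 1)

/-- Two graphons are equivalent if they agree a.e. after composing with
    measure-preserving maps of `[0,1]`. -/
def GraphonEquiv (f g : ℝ → ℝ → ℝ) : Prop :=
  ∃ σ σ' : ℝ → ℝ, MeasurePreserving σ unitMeasure unitMeasure ∧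
    MeasurePreserving σ' unitMeasure unitMeasure ∧
    ∀ᵐ p ∂(unitMeasure.prod unitMeasure), f (σ p.1) (σ p.2) = g (σ' p.1) (σ' p.2)

end

open Topology in
lemma small_aux (L : ℝ) (c : ℝ) (hc : 0 < c) :
    ∃ δ > 0, ∀ ε : ℝ, 0 < ε → ε < δ → 16 * ε * (L - Real.log ε) ^ 2 < c := by
  have h1 : Tendsto (fun s : ℝ => 16 * L ^ 2 * (s ^ 0 * Real.exp (-s))
      + 32 * L * (s ^ 1 * Real.exp (-s)) + 16 * (s ^ 2 * Real.exp (-s))) atTop (𝓝 0) := by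
    have := (((tendsto_pow_mul_exp_neg_atTop_nhds_zero 0).const_mul (16 * L ^ 2)).add
      ((tendsto_pow_mul_exp_neg_atTop_nhds_zero 1).const_mul (32 * L))).add
      ((tendsto_pow_mul_exp_neg_atTop_nhds_zero 2).const_mul 16)
    simpa using this
  have h2 : Tendsto (fun t : ℝ => 16 * Real.exp t * (L - t) ^ 2) atBot (𝓝 0) := by
    have := h1.comp tendsto_neg_atBot_atTop
    refine this.congr fun t => ?_
    simp only [Function.comp, neg_neg]
    ring
  have h3 : Tendsto (fun ε : ℝ => 16 * ε * (L - Real.log ε) ^ 2) (𝓝[>] 0) (𝓝 0) := by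
    have := h2.comp Real.tendsto_log_nhdsGT_zero
    refine this.congr' ?_
    filter_upwards [self_mem_nhdsWithin] with ε (hε : 0 < ε)
    simp [Function.comp, Real.exp_log hε]
  have h4 : ∀ᶠ ε in 𝓝[>] (0:ℝ), 16 * ε * (L - Real.log ε) ^ 2 < c :=
    h3.eventually_lt_const hc
  rw [eventually_nhdsWithin_iff, Metric.eventually_nhds_iff] at h4
  obtain ⟨δ, hδ, hδ'⟩ := h4
  refine ⟨δ, hδ, fun ε hε hεδ => ?_⟩
  exact hδ' (by simpa [abs_of_pos hε] using hεδ) hε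

/-- positivity and positive-definiteness of the coefficients
    `c₁, c₂, c₃` in the second-variation estimate, for all small `ε`. -/
theorem coefficients_positive_definite (e : ℝ) (he0 : 0 < e) (he : e < 1 / 2) :
    ∃ ε₀ > 0, ∀ ε : ℝ, 0 < ε → ε < ε₀ →
      (0 < I0dd ε / 2 + ε * (I0d (2 * e - ε) - I0d ε) / (2 * (e - ε) ^ 2)) ∧
      (1 < I0dd (2 * e - ε) / 2 + ε * (I0d (2 * e - ε) - I0d ε) / (2 * (e - ε) ^ 2)) ∧
      (0 < (2 * e - ε) * (I0d (2 * e - ε) - I0d ε) / (2 * (e - ε) ^ 2)) ∧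
      ((2 * e - ε) * (I0d (2 * e - ε) - I0d ε) / (2 * (e - ε) ^ 2)) ^ 2 <
        (I0dd ε / 2 + ε * (I0d (2 * e - ε) - I0d ε) / (2 * (e - ε) ^ 2)) *
        (I0dd (2 * e - ε) / 2 + ε * (I0d (2 * e - ε) - I0d ε) / (2 * (e - ε) ^ 2)) := by
  set L : ℝ := -Real.log (1 - 2 * e) with hLdef
  have hL : 0 < L := by
    have : Real.log (1 - 2 * e) < 0 :=
      Real.log_neg (by linarith) (by linarith)
    linarith
  obtain ⟨δ, hδ0, hδ⟩ := small_aux L (e ^ 2) (by positivity)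
  refine ⟨min δ (min (e / 2) (1 / 2)), lt_min hδ0 (lt_min (by linarith) (by norm_num)), fun ε hε hεlt => ?_⟩
  have hεδ : ε < δ := lt_of_lt_of_le hεlt (min_le_left _ _)
  have hεe2 : ε < e / 2 := lt_of_lt_of_le hεlt ((min_le_right _ _).trans (min_le_left _ _))
  have hε12 : ε < 1 / 2 := lt_of_lt_of_le hεlt ((min_le_right _ _).trans (min_le_right _ _))
  have hε1 : ε < 1 := by linarith
  have hεe : ε < e := by linarith
  have hu0 : 0 < 2 * e - ε := by linarith
  have hu1 : 2 * e - ε < 1 := by linarith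
  have hden : (0:ℝ) < 2 * (e - ε) ^ 2 := by
    have : 0 < e - ε := by linarith
    positivity
  set D : ℝ := I0d (2 * e - ε) - I0d ε with hDdef
  have hDpos : 0 < D := by
    have h1 : Real.log ε < Real.log (2 * e - ε) := Real.log_lt_log hε (by linarith)
    have h2 : Real.log (1 - (2 * e - ε)) < Real.log (1 - ε) :=
      Real.log_lt_log (by linarith) (by linarith)
    simp only [hDdef, I0d]
    linarith
  set P : ℝ := L - Real.log ε with hPdef
  have hlogε : Real.log ε < 0 := Real.log_neg hε hε1
  have hP : 0 < P := by simp only [hPdef]; linarith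
  have hDle : D ≤ P / 2 := by
    have h1 : Real.log (2 * e - ε) ≤ 0 := Real.log_nonpos hu0.le hu1.le
    have h2 : Real.log (1 - ε) ≤ 0 := Real.log_nonpos (by linarith) (by linarith)
    have h3 : Real.log (1 - 2 * e) ≤ Real.log (1 - (2 * e - ε)) :=
      Real.log_le_log (by linarith) (by linarith)
    simp only [hDdef, I0d, hPdef, hLdef]
    linarith
  have hTpos : 0 < ε * D / (2 * (e - ε) ^ 2) := div_pos (mul_pos hε hDpos) hden
  have hc1 : 1 / (4 * ε) < I0dd ε / 2 + ε * D / (2 * (e - ε) ^ 2) := by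
    have h1 : 0 < 1 / (1 - ε) := div_pos one_pos (by linarith)
    have e1 : 1 / (4 * ε) = (1 / ε) / 4 := by
      rw [one_div, one_div, div_eq_mul_inv, mul_inv]; ring
    have e2 : I0dd ε / 2 = (1 / ε + 1 / (1 - ε)) / 4 := by
      simp only [I0dd]; ring
    linarith
  have hc2 : 1 < I0dd (2 * e - ε) / 2 + ε * D / (2 * (e - ε) ^ 2) := by
    have h1 : 1 ≤ I0dd (2 * e - ε) / 2 := by
      simp only [I0dd]
      rw [le_div_iff₀ (by norm_num : (0:ℝ) < 2), le_div_iff₀ (by norm_num : (0:ℝ) < 2)]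
      rw [div_add_div _ _ (ne_of_gt hu0) (by linarith : (1:ℝ) - (2 * e - ε) ≠ 0)]
      rw [le_div_iff₀ (by nlinarith)]
      nlinarith [sq_nonneg (2 * (2 * e - ε) - 1)]
    linarith
  have hc3 : 0 < (2 * e - ε) * D / (2 * (e - ε) ^ 2) :=
    div_pos (mul_pos hu0 hDpos) hden
  refine ⟨by linarith [hc1, (by positivity : (0:ℝ) < 1 / (4 * ε))], hc2, hc3, ?_⟩
  -- main inequality
  have hc3le : (2 * e - ε) * D / (2 * (e - ε) ^ 2) ≤ e * P / (e ^ 2 / 2) := by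
    rw [div_le_div_iff₀ hden (by positivity)]
    have h_num : (2 * e - ε) * D ≤ e * P := by nlinarith
    have h_den : e ^ 2 / 2 ≤ 2 * (e - ε) ^ 2 := by nlinarith [sq_nonneg (e - 2 * ε)]
    exact mul_le_mul h_num h_den (by positivity) (mul_nonneg he0.le hP.le)
  have heq : e * P / (e ^ 2 / 2) = 2 * P / e := by
    field_simp
  rw [heq] at hc3le
  have hsq : ((2 * e - ε) * D / (2 * (e - ε) ^ 2)) ^ 2 ≤ (2 * P / e) ^ 2 :=
    pow_le_pow_left₀ hc3.le hc3le 2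
  have hkey : (2 * P / e) ^ 2 < 1 / (4 * ε) := by
    have h16 := hδ ε hε hεδ
    rw [div_pow, div_lt_div_iff₀ (by positivity) (by positivity), hPdef]
    linear_combination h16
  have hc1pos : 0 < I0dd ε / 2 + ε * D / (2 * (e - ε) ^ 2) := by
    have : (0:ℝ) < 1 / (4 * ε) := by positivity
    linarith
  calc ((2 * e - ε) * D / (2 * (e - ε) ^ 2)) ^ 2
      ≤ (2 * P / e) ^ 2 := hsq
    _ < 1 / (4 * ε) := hkey
    _ < I0dd ε / 2 + ε * D / (2 * (e - ε) ^ 2) := hc1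
    _ = (I0dd ε / 2 + ε * D / (2 * (e - ε) ^ 2)) * 1 := (mul_one _).symm
    _ < (I0dd ε / 2 + ε * D / (2 * (e - ε) ^ 2)) *
        (I0dd (2 * e - ε) / 2 + ε * D / (2 * (e - ε) ^ 2)) :=
      mul_lt_mul_of_pos_left hc2 hc1pos
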